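/- Let K be a field of characteristic 2 with a discrete valuation v : Kˣ → ℤ, valuation ring O, and let a, b, γ ∈ Kˣ and an integer n ≥ 1 be such that v(b) = 1, v(γ) = 0, γ^{4n} = 1, and a ≡ γ (mod b²·O). Set x = b^{-1} + 1. Then v(f(x)) = −1 and v(g(x)) = 1; in particular v(f(x)·g(x)) is even. Here f(x) = a^{-4n}·b·x² + x + a·b^{-1} and g(x) = a^{-8n}·b²·x² + a^{-4n}·b·x + a^{1-4n} + γ. -/

import Mathlib

/-- A discrete valuation on a field `K`: a surjective group homomorphism `v : Kˣ → ℤ`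
(encoded as an integer-valued function on `K`, multiplicative and surjective on nonzero
elements) satisfying `v(x + y) ≥ min (v x) (v y)`. -/
structure DiscreteVal (K : Type*) [Field K] where
  /-- the underlying valuation function (its values at `0` are irrelevant) -/
  v : K → ℤ
  map_mul : ∀ x y : K, x ≠ 0 → y ≠ 0 → v (x * y) = v x + v y
  min_le_add : ∀ x y : K, x ≠ 0 → y ≠ 0 → x + y ≠ 0 → min (v x) (v y) ≤ v (x + y)
  surjective : ∀ m : ℤ, ∃ x : K, x ≠ 0 ∧ v x = m

/-- `f(x) = a^{-4n}·b·x² + x + a·b⁻¹`. -/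
noncomputable def fDV {K : Type*} [Field K] (a b : K) (n : ℤ) (x : K) : K :=
  a ^ (-(4 * n)) * b * x ^ 2 + x + a * b⁻¹

/-- `g(x) = a^{-8n}·b²·x² + a^{-4n}·b·x + a^{1-4n} + γ`. -/
noncomputable def gDV {K : Type*} [Field K] (a b γ : K) (n : ℤ) (x : K) : K :=
  a ^ (-(8 * n)) * b ^ 2 * x ^ 2 + a ^ (-(4 * n)) * b * x + a ^ (1 - 4 * n) + γ

namespace DVaux
variable {K : Type*} [Field K] (w : DiscreteVal K)

/-- `y` is zero or has valuation at least `m`. -/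
def P (m : ℤ) (y : K) : Prop := y = 0 ∨ m ≤ w.v y

variable {w}

lemma v_one : w.v 1 = 0 := by
  have h := w.map_mul 1 1 one_ne_zero one_ne_zero
  rw [mul_one] at h; omega

lemma v_neg_one : w.v (-1 : K) = 0 := by
  have h := w.map_mul (-1 : K) (-1) (by norm_num) (by norm_num)
  rw [neg_mul_neg, one_mul, v_one] at h; omega

lemma v_neg {x : K} (hx : x ≠ 0) : w.v (-x) = w.v x := by
  have h := w.map_mul (-1 : K) x (by norm_num) hx
  rw [neg_one_mul, v_neg_one] at h; omega

lemma v_inv {x : K} (hx : x ≠ 0) : w.v x⁻¹ = - w.v x := by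
  have h := w.map_mul x x⁻¹ hx (inv_ne_zero hx)
  rw [mul_inv_cancel₀ hx, v_one] at h; omega

lemma P_mono {m k : ℤ} (h : k ≤ m) {y : K} (hy : P w m y) : P w k y := by
  rcases hy with h0 | h0
  · exact Or.inl h0
  · exact Or.inr (le_trans h h0)

lemma P_add {m : ℤ} {x y : K} (hx : P w m x) (hy : P w m y) : P w m (x + y) := by
  by_cases h0 : x = 0
  · simpa [h0] using hy
  by_cases h1 : y = 0
  · simpa [h1] using hx
  by_cases hs : x + y = 0
  · exact Or.inl hs
  rcases hx with h | h; · exact absurd h h0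
  rcases hy with h' | h'; · exact absurd h' h1
  have := w.min_le_add x y h0 h1 hs
  exact Or.inr (by omega)

lemma P_mul {m k : ℤ} {x y : K} (hx : P w m x) (hy : P w k y) : P w (m + k) (x * y) := by
  by_cases h0 : x = 0
  · exact Or.inl (by simp [h0])
  by_cases h1 : y = 0
  · exact Or.inl (by simp [h1])
  rcases hx with h | h; · exact absurd h h0
  rcases hy with h' | h'; · exact absurd h' h1
  right
  rw [w.map_mul x y h0 h1]; omega

lemma v_add_eq {m : ℤ} {x y : K} (hx : x ≠ 0) (hm : w.v x < m) (hy : P w m y) :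
    x + y ≠ 0 ∧ w.v (x + y) = w.v x := by
  by_cases h0 : y = 0
  · simp [h0, hx]
  rcases hy with h | h; · exact absurd h h0
  have hvy : w.v x < w.v y := lt_of_lt_of_le hm h
  have hne : x + y ≠ 0 := by
    intro hc
    have hyx : y = -x := by linear_combination hc
    rw [hyx, v_neg hx] at hvy
    exact lt_irrefl _ hvy
  refine ⟨hne, ?_⟩
  have h1 := w.min_le_add x y hx h0 hne
  have h2 := w.min_le_add (x + y) (-y) hne (neg_ne_zero.mpr h0) (by simpa using hx)
  rw [add_neg_cancel_right, v_neg h0] at h2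
  omega

lemma P_pow_sub_one {m : ℤ} {u : K} (hu : P w m u) (h1 : P w 0 (1 + u)) (k : ℕ) :
    P w m ((1 + u) ^ k - 1) := by
  induction k with
  | zero => exact Or.inl (by simp)
  | succ k ih =>
      have h := P_add (by simpa using P_mul ih h1) hu
      have heq : (1 + u) ^ (k + 1) - 1 = ((1 + u) ^ k - 1) * (1 + u) + u := by ring
      rw [heq]; exact h

end DVaux

open DVaux in
/-- Local solvability computation at the place `v_b` (Lemma 3.1 of the paper): with
`x = b⁻¹ + 1`, `v(f(x)) = −1` and `v(g(x)) = 1`; in particular `v(f(x)·g(x))` is even.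
Here `O` denotes the valuation ring `{x : v x ≥ 0} ∪ {0}`. -/
theorem val_f_neg_one_and_val_g_one_at_b (K : Type*) [Field K] [CharP K 2] (w : DiscreteVal K)
    (a b γ : K) (ha0 : a ≠ 0) (hb0 : b ≠ 0) (hγ0 : γ ≠ 0) (n : ℤ) (hn : 1 ≤ n)
    (hb : w.v b = 1) (hγ : w.v γ = 0) (hγpow : γ ^ (4 * n) = 1)
    (hab : ∃ o : K, (o = 0 ∨ 0 ≤ w.v o) ∧ a = γ + b ^ 2 * o)
    (x : K) (hx : x = b⁻¹ + 1) :
    (fDV a b n x ≠ 0 ∧ w.v (fDV a b n x) = -1) ∧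
    (gDV a b γ n x ≠ 0 ∧ w.v (gDV a b γ n x) = 1) ∧
    Even (w.v (fDV a b n x * gDV a b γ n x)) := by
  obtain ⟨o, ho, hao⟩ := hab
  have h2 : (2 : K) = 0 := by
    have := CharP.cast_eq_zero K 2
    exact_mod_cast this
  have hby : b * b⁻¹ = 1 := mul_inv_cancel₀ hb0
  have hvbi : w.v b⁻¹ = -1 := by rw [v_inv hb0, hb]
  -- basic valuations
  have hvb2 : w.v (b ^ 2) = 2 := by
    rw [pow_two, w.map_mul b b hb0 hb0, hb]; norm_num
  have hPb2o : P w 2 (b ^ 2 * o) := by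
    simpa using P_mul (w := w) (Or.inr (le_of_eq hvb2.symm)) ho
  -- v a = 0
  have hvaeq := v_add_eq (w := w) hγ0 (show w.v γ < 2 by omega) hPb2o
  have hva : w.v a = 0 := by rw [hao, hvaeq.2, hγ]
  -- the unit u
  set u : K := b ^ 2 * o * γ⁻¹ with hu_def
  have hvγi : w.v γ⁻¹ = 0 := by rw [v_inv hγ0, hγ]; norm_num
  have hPu : P w 2 u := by
    simpa [hu_def] using P_mul (w := w) hPb2o (Or.inr (le_of_eq hvγi.symm))
  have hau : a = γ * (1 + u) := by
    rw [hao, hu_def]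
    field_simp
  have h1u : (1 + u) ≠ 0 ∧ w.v (1 + u) = 0 := by
    by_cases hu0 : u = 0
    · exact ⟨by simp [hu0], by simp [hu0, v_one]⟩
    · have := v_add_eq (w := w) (x := (1:K)) (m := 2) one_ne_zero
        (by rw [v_one]; norm_num) hPu
      exact ⟨this.1, by rw [this.2, v_one]⟩
  -- E = (1+u)^k
  set k : ℕ := (4 * n).toNat with hk_def
  have hk4n : ((k : ℤ)) = 4 * n := Int.toNat_of_nonneg (by omega)
  set E : K := (1 + u) ^ k with hE_def
  have hE0 : E ≠ 0 := pow_ne_zero _ h1u.1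
  have haE : a ^ (4 * n) = E := by
    rw [hau, mul_zpow, hγpow, one_mul, ← hk4n, zpow_natCast]
  have hPE1 : P w 2 (E - 1) := P_pow_sub_one hPu (Or.inr (le_of_eq h1u.2.symm)) k
  have hvE : w.v E = 0 := by
    have := v_add_eq (w := w) (x := (1:K)) (m := 1) one_ne_zero
      (by rw [v_one]; norm_num) (P_mono (by norm_num) hPE1)
    have heq : (1 : K) + (E - 1) = E := by ring
    rw [heq, v_one] at this
    exact this.2
  -- A = a^{-4n}
  have hA : a ^ (-(4 * n)) = E⁻¹ := by rw [zpow_neg, haE]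
  have hA0 : a ^ (-(4 * n)) ≠ 0 := by rw [hA]; exact inv_ne_zero hE0
  have hvEi : w.v E⁻¹ = 0 := by rw [v_inv hE0, hvE]; norm_num
  have hvA : w.v (a ^ (-(4 * n))) = 0 := by rw [hA, hvEi]
  set A : K := a ^ (-(4 * n)) with hA_def
  -- ε = A - 1
  have hPε : P w 2 (A - 1) := by
    have heq : A - 1 = (E - 1) * (-1) * E⁻¹ := by
      rw [hA]
      field_simp
      ring
    rw [heq]
    have h1 : P w 2 ((E - 1) * (-1)) := by
      simpa using P_mul (w := w) hPE1 (Or.inr (le_of_eq v_neg_one.symm))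
    simpa using P_mul (w := w) h1 (Or.inr (le_of_eq hvEi.symm))
  have hPA : P w 0 A := by
    have : A = 1 + (A - 1) := by ring
    rw [this]
    exact P_add (Or.inr (le_of_eq v_one.symm)) (P_mono (by norm_num) hPε)
  -- exponent identities for g
  have hB : a ^ (-(8 * n)) = A ^ 2 := by
    rw [show (-(8 * n) : ℤ) = (-(4 * n)) + (-(4 * n)) by ring, zpow_add₀ ha0, pow_two, hA_def]
  have hA1 : a ^ (1 - 4 * n) = a * A := by
    rw [show (1 - 4 * n : ℤ) = 1 + (-(4 * n)) by ring, zpow_add₀ ha0, zpow_one, hA_def]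
  -- f computation
  have hkeyf : fDV a b n x = a * b⁻¹ + ((A - 1) * b⁻¹ + A * b + 1) := by
    simp only [fDV, hx, ← hA_def]
    linear_combination (A * b⁻¹) * hby + (A * b * b⁻¹ + b⁻¹) * h2
  have hvab : w.v (a * b⁻¹) = -1 := by
    rw [w.map_mul a b⁻¹ ha0 (inv_ne_zero hb0), hva, hvbi]; norm_num
  have hPf1 : P w 1 ((A - 1) * b⁻¹) := by
    have := P_mul (w := w) (m := 2) (k := -1) hPε (Or.inr (le_of_eq hvbi.symm))
    simpa using this
  have hPf2 : P w 1 (A * b) := by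
    have := P_mul (w := w) (m := 0) (k := 1) hPA (Or.inr (le_of_eq hb.symm))
    simpa using this
  have hPRf : P w 0 ((A - 1) * b⁻¹ + A * b + 1) :=
    P_add (P_add (P_mono (by norm_num) hPf1) (P_mono (by norm_num) hPf2))
      (Or.inr (le_of_eq v_one.symm))
  have hf := v_add_eq (w := w) (mul_ne_zero ha0 (inv_ne_zero hb0))
    (show w.v (a * b⁻¹) < 0 by omega) hPRf
  rw [← hkeyf] at hf
  have hvf : w.v (fDV a b n x) = -1 := by rw [hf.2, hvab]
  -- g computation
  have hkeyg : gDV a b γ n x = b +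
      ((A - 1) ^ 2 + b ^ 2 + (A - 1) ^ 2 * b ^ 2 + (A - 1) + (A - 1) * b + b ^ 2 * o
        + a * (A - 1)) := by
    simp only [gDV, hx, hB, hA1, ← hA_def]
    linear_combination (A ^ 2 * (b * b⁻¹ + 1) + 2 * A ^ 2 * b + A) * hby
      + (A ^ 2 * b + A + A * b ^ 2 - b ^ 2 + γ) * h2 + hao
  have hPg1 : P w 2 ((A - 1) ^ 2) := by
    rw [pow_two]
    exact P_mono (by norm_num) (P_mul hPε hPε)
  have hPg3 : P w 2 ((A - 1) ^ 2 * b ^ 2) := by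
    have := P_mul (w := w) (m := 2) (k := 2) hPg1 (Or.inr (le_of_eq hvb2.symm))
    exact P_mono (by norm_num) this
  have hPg5 : P w 2 ((A - 1) * b) := by
    have := P_mul (w := w) (m := 2) (k := 1) hPε (Or.inr (le_of_eq hb.symm))
    exact P_mono (by norm_num) this
  have hPg7 : P w 2 (a * (A - 1)) := by
    have := P_mul (w := w) (m := 0) (k := 2) (Or.inr (le_of_eq hva.symm)) hPε
    simpa using this
  have hPRg : P w 2 ((A - 1) ^ 2 + b ^ 2 + (A - 1) ^ 2 * b ^ 2 + (A - 1) + (A - 1) * b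
      + b ^ 2 * o + a * (A - 1)) :=
    P_add (P_add (P_add (P_add (P_add (P_add hPg1 (Or.inr (le_of_eq hvb2.symm))) hPg3)
      hPε) hPg5) hPb2o) hPg7
  have hg := v_add_eq (w := w) hb0 (show w.v b < 2 by omega) hPRg
  rw [← hkeyg] at hg
  have hvg : w.v (gDV a b γ n x) = 1 := by rw [hg.2, hb]
  refine ⟨⟨hf.1, hvf⟩, ⟨hg.1, hvg⟩, ?_⟩
  rw [w.map_mul _ _ hf.1 hg.1, hvf, hvg]
  norm_num
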